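/- Let η be a tnn update over ℤ^d and let φ be a propositional formula built with ∧ and ∨ from atoms p < q with p, q ∈ ℤ[x1,...,xd]. Then for every e ∈ ℤ^d there exists s ∈ ℕ such that for all n ≥ s: φ holds at η^n(e) if and only if φ holds at η^s(e). That is, the truth value of the guard stabilizes along every orbit of a tnn update, so the stabilization threshold (the smallest such s) exists. -/

import Mathlib

open scoped Classical

noncomputable section

namespace Koat

/-! ### Formulas over polynomial atoms `p < q` -/

inductive Fml (V : Type*) where
  | lt  : MvPolynomial V ℤ → MvPolynomial V ℤ → Fml V
  | and : Fml V → Fml V → Fml V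
  | or  : Fml V → Fml V → Fml V

namespace Fml

variable {V : Type*}

/-- A formula holds in a state `σ : V → ℤ`. -/
def holds (σ : V → ℤ) : Fml V → Prop
  | .lt p q  => MvPolynomial.eval σ p < MvPolynomial.eval σ q
  | .and f g => holds σ f ∧ holds σ g
  | .or f g  => holds σ f ∨ holds σ g

/-- Applying an update `η` to a formula (substituting `η v` for each variable `v`). -/
def subst (η : V → MvPolynomial V ℤ) : Fml V → Fml V
  | .lt p q  => .lt (MvPolynomial.bind₁ η p) (MvPolynomial.bind₁ η q)
  | .and f g => .and (subst η f) (subst η g)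
  | .or f g  => .or (subst η f) (subst η g)

/-- The variables occurring in a formula. -/
def vars : Fml V → Finset V
  | .lt p q  => p.vars ∪ q.vars
  | .and f g => vars f ∪ vars g
  | .or f g  => vars f ∪ vars g

/-- The list of atoms `(s₁, s₂)` (meaning `s₁ < s₂`) occurring in a formula. -/
def atoms : Fml V → List (MvPolynomial V ℤ × MvPolynomial V ℤ)
  | .lt p q  => [(p, q)]
  | .and f g => atoms f ++ atoms g
  | .or f g  => atoms f ++ atoms g

end Fml

/-! ### Bounds -/

/-- The set `𝓑` of bounds: built from `ℕ ∪ {ω}`, variables, `+`, `·`, `k^{·}`. -/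
inductive Bnd (V : Type*) where
  | const : ℕ∞ → Bnd V
  | var : V → Bnd V
  | add : Bnd V → Bnd V → Bnd V
  | mul : Bnd V → Bnd V → Bnd V
  | exp : ℕ → Bnd V → Bnd V

/-- `k ^ e` for `e : ℕ∞`. -/
def epow (k : ℕ) (e : ℕ∞) : ℕ∞ := if e = ⊤ then ⊤ else ((k ^ e.toNat : ℕ) : ℕ∞)

namespace Bnd

variable {V : Type*}

/-- Evaluation of a bound in a (non-negative) state, with values in `ℕ ∪ {ω}`. -/
def eval (σ : V → ℕ) : Bnd V → ℕ∞
  | .const c => c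
  | .var v => (σ v : ℕ∞)
  | .add b₁ b₂ => eval σ b₁ + eval σ b₂
  | .mul b₁ b₂ => eval σ b₁ * eval σ b₂
  | .exp k b => epow k (eval σ b)

/-- `b [v / f v | v ∈ PV]`: substitute the bound `f v` for every program variable `v ∈ PV`. -/
def substOn (PV : Set V) (f : V → Bnd V) : Bnd V → Bnd V
  | .const c => .const c
  | .var v => if v ∈ PV then f v else .var v
  | .add b₁ b₂ => .add (substOn PV f b₁) (substOn PV f b₂)
  | .mul b₁ b₂ => .mul (substOn PV f b₁) (substOn PV f b₂)
  | .exp k b => .exp k (substOn PV f b)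

end Bnd

/-- The sum of a list of bounds. -/
def bndSum {V : Type*} (l : List (Bnd V)) : Bnd V := l.foldr Bnd.add (Bnd.const 0)

/-! ### Integer programs -/

/-- A transition `(ℓ, φ, η, ℓ')`. -/
structure Trans (L V : Type*) where
  src : L
  guard : Fml V
  update : V → MvPolynomial V ℤ
  tgt : L

/-- A configuration `(ℓ, σ)`. -/
abbrev Config (L V : Type*) := L × (V → ℤ)

/-- The evaluation step `(ℓ, σ) →_t (ℓ', σ')`: program variables are updated by `t.update`,
temporary variables (those outside `PV`) get arbitrary values. -/
def Step {L V : Type*} (PV : Set V) (t : Trans L V) (c c' : Config L V) : Prop :=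
  c.1 = t.src ∧ c'.1 = t.tgt ∧ t.guard.holds c.2 ∧
    ∀ v ∈ PV, c'.2 v = MvPolynomial.eval c.2 (t.update v)

/-- `→_S`, the union of `→_t` over `t ∈ S`. -/
def StepAny {L V : Type*} (PV : Set V) (S : Finset (Trans L V)) :
    Config L V → Config L V → Prop :=
  fun c c' => ∃ t ∈ S, Step PV t c c'

/-- `k`-fold composition of a relation. -/
def relPow {α : Type*} (R : α → α → Prop) : ℕ → α → α → Prop
  | 0 => Eq
  | n + 1 => Relation.Comp (relPow R n) R

/-- `→*_S ∘ →_t`. -/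
def starThen {L V : Type*} (PV : Set V) (S : Finset (Trans L V)) (t : Trans L V) :
    Config L V → Config L V → Prop :=
  Relation.Comp (Relation.ReflTransGen (StepAny PV S)) (Step PV t)

/-- `|σ|`, the state of absolute values. -/
def absState {V : Type*} (σ : V → ℤ) : V → ℕ := fun v => (σ v).natAbs

/-- `RB` is a global runtime bound for the program `(PV, L, ℓ₀, T)`. -/
def IsGlobalRB {L V : Type*} (PV : Set V) (ℓ₀ : L) (T : Finset (Trans L V))
    (RB : Trans L V → Bnd V) : Prop :=
  ∀ t ∈ T, ∀ σ₀ : V → ℤ,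
    (⨆ k ∈ {k : ℕ | ∃ c' : Config L V, relPow (starThen PV T t) k (ℓ₀, σ₀) c'}, (k : ℕ∞))
      ≤ (RB t).eval (absState σ₀)

/-- `SB` is a size bound for the program `(PV, L, ℓ₀, T)`. -/
def IsSizeBound {L V : Type*} (PV : Set V) (ℓ₀ : L) (T : Finset (Trans L V))
    (SB : Trans L V → V → Bnd V) : Prop :=
  ∀ t ∈ T, ∀ v ∈ PV, ∀ σ₀ : V → ℤ,
    (⨆ s ∈ {s : ℕ | ∃ c' : Config L V, starThen PV T t (ℓ₀, σ₀) c' ∧ s = (c'.2 v).natAbs},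
      (s : ℕ∞)) ≤ (SB t v).eval (absState σ₀)

/-- The entry transitions `E_{T'}`. -/
def entrySet {L V : Type*} (T T' : Finset (Trans L V)) : Set (Trans L V) :=
  {t | t ∈ T ∧ t ∉ T' ∧ ∃ t' ∈ T', t'.src = t.tgt}

/-- `RB` is a local runtime bound for `T'gt` w.r.t. `T'` in the program `(PV, L, ℓ₀, T)`. -/
def IsLocalRB {L V : Type*} (PV : Set V) (ℓ₀ : L) (T T'gt T' : Finset (Trans L V))
    (RB : Trans L V → Bnd V) : Prop :=
  ∀ t ∈ T'gt, ∀ r ∈ entrySet T T', ∀ σ : V → ℤ,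
    (⨆ k ∈ {k : ℕ | ∃ (σ₀ : V → ℤ) (c' : Config L V),
        starThen PV T r (ℓ₀, σ₀) (r.tgt, σ) ∧ relPow (starThen PV T' t) k (r.tgt, σ) c'},
      (k : ℕ∞)) ≤ (RB r).eval (absState σ)

/-- Chaining two transitions: `t₁ ⋆ t₂`. -/
def chain2 {L V : Type*} (t₁ t₂ : Trans L V) : Trans L V :=
  ⟨t₁.src, (t₁.guard).and (t₂.guard.subst t₁.update),
    fun v => MvPolynomial.bind₁ t₁.update (t₂.update v), t₂.tgt⟩

/-- Chaining a (nonempty) list of transitions `t₁ ⋆ ⋯ ⋆ tₙ` (with a default for `[]`). -/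
def chainFold {L V : Type*} (dflt : Trans L V) : List (Trans L V) → Trans L V
  | [] => dflt
  | t :: ts => ts.foldl chain2 t

/-- The composed evaluation relation `→_{t₁} ∘ ⋯ ∘ →_{tₙ}`. -/
def stepsList {L V : Type*} (PV : Set V) : List (Trans L V) → Config L V → Config L V → Prop
  | [] => Eq
  | t :: ts => Relation.Comp (Step PV t) (stepsList PV ts)

/-! ### Twn-loops -/

/-- An update `η` as a function on states `ℤ^d → ℤ^d`. -/
def updFun {d : ℕ} (η : Fin d → MvPolynomial (Fin d) ℤ) (σ : Fin d → ℤ) : Fin d → ℤ :=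
  fun i => MvPolynomial.eval σ (η i)

/-- `η` is triangular weakly non-linear with data `c`, `p`:
`η xᵢ = cᵢ·xᵢ + pᵢ` with `pᵢ ∈ ℤ[x_{i+1},…,x_d]`. -/
def IsTriangular {d : ℕ} (η : Fin d → MvPolynomial (Fin d) ℤ) (c : Fin d → ℤ)
    (p : Fin d → MvPolynomial (Fin d) ℤ) : Prop :=
  ∀ i, η i = MvPolynomial.C (c i) * MvPolynomial.X i + p i ∧ ∀ j ∈ (p i).vars, i < j

/-- Triangular weakly non-linear update. -/
def IsTWN {d : ℕ} (η : Fin d → MvPolynomial (Fin d) ℤ) : Prop :=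
  ∃ c p, IsTriangular η c p

/-- Triangular weakly non-linear update with non-negative coefficients. -/
def IsTNN {d : ℕ} (η : Fin d → MvPolynomial (Fin d) ℤ) : Prop :=
  ∃ c p, IsTriangular η c p ∧ ∀ i, 0 ≤ c i

/-- `(b₁,a₁) >_lex (b₂,a₂)`. -/
def lexGt (b₁ a₁ b₂ a₂ : ℕ) : Prop := b₂ < b₁ ∨ (b₁ = b₂ ∧ a₂ < a₁)

/-- The set of all valid `k`-monotonicity thresholds of `(b₁,a₁)` and `(b₂,a₂)`. -/
def mthSet (k b₁ a₁ b₂ a₂ : ℕ) : Set ℕ :=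
  {n₀ | ∀ n ≥ n₀, k * (n ^ a₂ * b₂ ^ n) < n ^ a₁ * b₁ ^ n}

/-- The `k`-monotonicity threshold of `(b₁,a₁)` and `(b₂,a₂)` (the smallest member of
`mthSet`, when it exists). -/
def mth (k b₁ a₁ b₂ a₂ : ℕ) : ℕ := sInf (mthSet k b₁ a₁ b₂ a₂)

/-- `M_j` as in the paper. -/
def Mdef (b a : ℕ → ℕ) (j : ℕ) : ℕ :=
  if b j = b (j - 1) then 0 else mth 1 (b j) (a j) (b (j - 1)) (a (j - 1) + 1)

/-- `N_j` as in the paper. -/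
def Ndef (b a : ℕ → ℕ) (j : ℕ) : ℕ :=
  if j = 2 then 1
  else if j = 3 then mth 1 (b 2) (a 2) (b 1) (a 1)
  else
    max ((Finset.Icc 1 (j - 3)).sup fun i => mth 1 (b (j - 2)) (a (j - 2)) (b i) (a i))
      (mth (j - 2) (b (j - 1)) (a (j - 1)) (b (j - 2)) (a (j - 2)))

/-- The over-approximation `⊔ {p j | j ∈ s}`: each monomial gets the maximal absolute value
of its coefficients in the `p j`. -/
def sqcupF {d : ℕ} {ι : Type*} (s : Finset ι) (p : ι → MvPolynomial (Fin d) ℤ) :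
    MvPolynomial (Fin d) ℤ :=
  ∑ m ∈ s.biUnion fun j => (p j).support,
    MvPolynomial.monomial m (((s.sup fun j => ((p j).coeff m).natAbs : ℕ) : ℤ))

/-- Normalized poly-exponential expressions, as finite (formal) sums of
`p · n^a · b^n` with `p ∈ ℚ[x₁,…,x_d]`. -/
abbrev NPE (d : ℕ) := List (MvPolynomial (Fin d) ℚ × ℕ × ℕ)

/-- The value of a normalized poly-exponential expression at `(e, n)`. -/
def evalNPE {d : ℕ} (l : NPE d) (e : Fin d → ℤ) (n : ℕ) : ℚ :=
  (l.map fun tr =>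
    MvPolynomial.eval (fun i => (e i : ℚ)) tr.1 * (n : ℚ) ^ tr.2.1 * (tr.2.2 : ℚ) ^ n).sum


namespace Stab

open Filter MvPolynomial

/-- Monoid of exponents: `(b, a)` stands for `n ↦ b^n * n^a`. -/
abbrev M := ℕ × Multiplicative ℕ

/-- The monoid hom `(b,a) ↦ b^n * n^a`. -/
def phiN (n : ℕ) : M →* ℚ where
  toFun x := (x.1 : ℚ) ^ n * (n : ℚ) ^ (Multiplicative.toAdd x.2)
  map_one' := by simp
  map_mul' x y := by
    simp only [Prod.fst_mul, Prod.snd_mul, toAdd_mul, pow_add, Nat.cast_mul, mul_pow]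
    ring

/-- Evaluation of a formal poly-exponential at `n`. -/
def evalAt (n : ℕ) : MonoidAlgebra ℚ M →ₐ[ℚ] ℚ := MonoidAlgebra.lift ℚ ℚ M (phiN n)

lemma evalAt_single (n : ℕ) (x : M) (α : ℚ) :
    evalAt n (MonoidAlgebra.single x α) = α * ((x.1 : ℚ) ^ n * (n : ℚ) ^ (Multiplicative.toAdd x.2)) := by
  rw [evalAt, MonoidAlgebra.lift_single]; simp [phiN, smul_eq_mul]

/-- `u : ℕ → ℚ` is eventually a poly-exponential. -/
def PE (u : ℕ → ℚ) : Prop := ∃ P, ∀ᶠ n in atTop, u n = evalAt n P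

/-- Poly-exponential functions form a subalgebra of `ℕ → ℚ`. -/
def PEsub : Subalgebra ℚ (ℕ → ℚ) where
  carrier := {u | PE u}
  add_mem' := by
    rintro u v ⟨P, hP⟩ ⟨Q, hQ⟩
    exact ⟨P + Q, by filter_upwards [hP, hQ] with n h1 h2; simp [h1, h2]⟩
  mul_mem' := by
    rintro u v ⟨P, hP⟩ ⟨Q, hQ⟩
    exact ⟨P * Q, by filter_upwards [hP, hQ] with n h1 h2; simp [h1, h2]⟩
  algebraMap_mem' := fun r =>
    ⟨algebraMap ℚ _ r, Eventually.of_forall fun n => by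
      simp only [MonoidAlgebra.coe_algebraMap, Function.comp_apply]
      rw [evalAt_single]
      simp⟩

lemma PE_const (r : ℚ) : PE (fun _ => r) := PEsub.algebraMap_mem' r

/-! ### Solving `b·q(t+1) - c·q(t) = p(t)` -/

open Polynomial in
lemma poly_solve_ne {b c : ℚ} (hbc : b ≠ c) (d : ℕ) :
    ∀ p : Polynomial ℚ, p.natDegree ≤ d →
      ∃ q : Polynomial ℚ, ∀ t : ℚ, b * q.eval (t + 1) - c * q.eval t = p.eval t := by
  induction d with
  | zero =>
    intro p hp
    refine ⟨Polynomial.C (p.coeff 0 / (b - c)), fun t => ?_⟩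
    rw [p.eq_C_of_natDegree_le_zero hp]
    have : b - c ≠ 0 := sub_ne_zero.2 hbc
    simp only [Polynomial.eval_C]
    field_simp
    ring_nf; simp
  | succ d ih =>
    intro p hp
    set α : ℚ := p.coeff (d + 1) / (b - c) with hα
    set T : Polynomial ℚ :=
      Polynomial.C α * (Polynomial.C b * (Polynomial.X + 1) ^ (d + 1)
        - Polynomial.C c * Polynomial.X ^ (d + 1)) with hT
    have hbc0 : b - c ≠ 0 := sub_ne_zero.2 hbc
    have hdeg : (p - T).natDegree ≤ d := by
      rw [natDegree_le_iff_coeff_eq_zero]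
      intro N hN
      have hTN : T.coeff N = α * (b * ((d + 1).choose N : ℚ) - c * (if N = d + 1 then 1 else 0)) := by
        simp [hT, Polynomial.coeff_C_mul, Polynomial.coeff_sub, coeff_X_add_one_pow,
          Polynomial.coeff_X_pow, mul_sub]
      rcases eq_or_lt_of_le (Nat.succ_le_of_lt hN) with h | h
      · -- N = d + 1
        have hNe : N = d + 1 := h.symm
        subst hNe
        rw [Polynomial.coeff_sub, hTN]
        simp only [Nat.choose_self, Nat.cast_one, if_pos rfl]
        field_simp [hα]
        simp only [if_true, mul_one]; rw [hα]; field_simp; ring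
      · -- N > d + 1
        have h1 : p.coeff N = 0 := p.coeff_eq_zero_of_natDegree_lt (lt_of_le_of_lt hp h)
        have h2 : (d + 1).choose N = 0 := Nat.choose_eq_zero_of_lt h
        have h3 : N ≠ d + 1 := by omega
        rw [Polynomial.coeff_sub, hTN, h1, h2, if_neg h3]
        simp
    obtain ⟨q', hq'⟩ := ih (p - T) hdeg
    refine ⟨Polynomial.C α * Polynomial.X ^ (d + 1) + q', fun t => ?_⟩
    have h' := hq' t
    simp only [Polynomial.eval_sub, hT, Polynomial.eval_mul, Polynomial.eval_add,
      Polynomial.eval_pow, Polynomial.eval_C, Polynomial.eval_X, Polynomial.eval_one] at h' ⊢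
    ring_nf
    ring_nf at h'
    linarith

open Polynomial in
lemma poly_solve_eq {b : ℚ} (hb : b ≠ 0) (d : ℕ) :
    ∀ p : Polynomial ℚ, p.natDegree ≤ d →
      ∃ q : Polynomial ℚ, ∀ t : ℚ,
        b * ((t + 1) * q.eval (t + 1) - t * q.eval t) = p.eval t := by
  induction d with
  | zero =>
    intro p hp
    refine ⟨Polynomial.C (p.coeff 0 / b), fun t => ?_⟩
    rw [p.eq_C_of_natDegree_le_zero hp]
    simp only [Polynomial.eval_C]
    field_simp
    ring_nf; simp
  | succ d ih =>
    intro p hp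
    set α : ℚ := p.coeff (d + 1) / (b * (d + 2)) with hα
    set T : Polynomial ℚ :=
      Polynomial.C (b * α) * ((Polynomial.X + 1) ^ (d + 2) - Polynomial.X ^ (d + 2)) with hT
    have hd2 : ((d : ℚ) + 2) ≠ 0 := by positivity
    have hdeg : (p - T).natDegree ≤ d := by
      rw [natDegree_le_iff_coeff_eq_zero]
      intro N hN
      have hTN : T.coeff N = b * α * (((d + 2).choose N : ℚ) - (if N = d + 2 then 1 else 0)) := by
        simp [hT, Polynomial.coeff_C_mul, Polynomial.coeff_sub, coeff_X_add_one_pow,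
          Polynomial.coeff_X_pow, mul_sub, mul_assoc]
      rcases eq_or_lt_of_le (Nat.succ_le_of_lt hN) with h | h
      · -- N = d + 1
        have hNe : N = d + 1 := h.symm
        subst hNe
        rw [Polynomial.coeff_sub, hTN]
        have hch : (d + 2).choose (d + 1) = d + 2 := Nat.choose_succ_self_right (d + 1)
        rw [hch, if_neg (by omega)]
        push_cast
        rw [hα]; field_simp; ring
      · -- N > d + 1
        have h1 : p.coeff N = 0 := p.coeff_eq_zero_of_natDegree_lt (lt_of_le_of_lt hp h)
        rcases eq_or_lt_of_le (Nat.succ_le_of_lt h) with h2 | h2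
        · have hNe : N = d + 2 := h2.symm
          subst hNe
          rw [Polynomial.coeff_sub, hTN, h1, if_pos rfl]
          simp [Nat.choose_self]
        · have h3 : (d + 2).choose N = 0 := Nat.choose_eq_zero_of_lt h2
          rw [Polynomial.coeff_sub, hTN, h1, h3, if_neg (by omega)]
          simp
    obtain ⟨q', hq'⟩ := ih (p - T) hdeg
    refine ⟨Polynomial.C α * Polynomial.X ^ (d + 1) + q', fun t => ?_⟩
    have h' := hq' t
    simp only [Polynomial.eval_sub, hT, Polynomial.eval_mul, Polynomial.eval_add,
      Polynomial.eval_pow, Polynomial.eval_C, Polynomial.eval_X, Polynomial.eval_one] at h' ⊢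
    ring_nf
    ring_nf at h'
    linarith

/-! ### Solving the recurrence for a single term -/

lemma solve_single (c : ℕ) (x : M) (α : ℚ) :
    ∃ Q, ∀ n : ℕ, 1 ≤ n →
      evalAt (n + 1) Q = c * evalAt n Q + evalAt n (MonoidAlgebra.single x α) := by
  obtain ⟨b, a⟩ := x
  set a' : ℕ := Multiplicative.toAdd a with ha'
  rcases Nat.eq_zero_or_pos b with hb0 | hb1
  · -- base 0: the forcing term vanishes for n ≥ 1
    refine ⟨0, fun n hn => ?_⟩
    subst hb0
    rw [evalAt_single]
    simp [zero_pow (by omega : n ≠ 0)]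
  rcases eq_or_ne b c with hbc | hbc
  · -- resonant case b = c
    have hbQ : (b : ℚ) ≠ 0 := by positivity
    obtain ⟨q, hq⟩ := poly_solve_eq hbQ a' (Polynomial.C α * Polynomial.X ^ a')
      (Polynomial.natDegree_C_mul_X_pow_le α a')
    set Q : MonoidAlgebra ℚ M := ∑ k ∈ Finset.range (q.natDegree + 1),
      MonoidAlgebra.single ((b, Multiplicative.ofAdd (k + 1)) : M) (q.coeff k) with hQ
    have hev : ∀ n : ℕ, evalAt n Q = (n : ℚ) * q.eval (n : ℚ) * (b : ℚ) ^ n := by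
      intro n
      rw [hQ, map_sum]
      rw [Polynomial.eval_eq_sum_range, Finset.mul_sum, Finset.sum_mul]
      refine Finset.sum_congr rfl fun k _ => ?_
      rw [evalAt_single]
      simp only [show Multiplicative.toAdd (Multiplicative.ofAdd (k+1)) = k + 1 from rfl, pow_succ]
      ring
    refine ⟨Q, fun n _ => ?_⟩
    have h := hq (n : ℚ)
    rw [hev, hev, evalAt_single]
    have hcast : ((n : ℚ) + 1) = ((n + 1 : ℕ) : ℚ) := by push_cast; ring
    rw [← hcast]
    simp only [Polynomial.eval_mul, Polynomial.eval_pow, Polynomial.eval_C,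
      Polynomial.eval_X] at h
    have hpow : (b : ℚ) ^ (n + 1) = (b : ℚ) ^ n * b := by ring
    rw [hpow, ← hbc]
    nlinarith [h, pow_pos (by positivity : (0:ℚ) < (b:ℚ)) n]
  · -- non-resonant case b ≠ c
    have hbcQ : (b : ℚ) ≠ (c : ℚ) := by exact_mod_cast hbc
    obtain ⟨q, hq⟩ := poly_solve_ne hbcQ a' (Polynomial.C α * Polynomial.X ^ a')
      (Polynomial.natDegree_C_mul_X_pow_le α a')
    set Q : MonoidAlgebra ℚ M := ∑ k ∈ Finset.range (q.natDegree + 1),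
      MonoidAlgebra.single ((b, Multiplicative.ofAdd k) : M) (q.coeff k) with hQ
    have hev : ∀ n : ℕ, evalAt n Q = q.eval (n : ℚ) * (b : ℚ) ^ n := by
      intro n
      rw [hQ, map_sum]
      rw [Polynomial.eval_eq_sum_range, Finset.sum_mul]
      refine Finset.sum_congr rfl fun k _ => ?_
      rw [evalAt_single]
      simp only [show ∀ k : ℕ, Multiplicative.toAdd (Multiplicative.ofAdd k) = k from fun _ => rfl]
      ring
    refine ⟨Q, fun n _ => ?_⟩
    have h := hq (n : ℚ)
    rw [hev, hev, evalAt_single]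
    have hcast : ((n : ℚ) + 1) = ((n + 1 : ℕ) : ℚ) := by push_cast; ring
    rw [← hcast]
    simp only [Polynomial.eval_mul, Polynomial.eval_pow, Polynomial.eval_C,
      Polynomial.eval_X] at h
    have hpow : (b : ℚ) ^ (n + 1) = (b : ℚ) ^ n * b := by ring
    rw [hpow]
    nlinarith [h, pow_pos (by positivity : (0:ℚ) < (b:ℚ)) n]

lemma solve_all (c : ℕ) (P : MonoidAlgebra ℚ M) :
    ∃ Q, ∀ n : ℕ, 1 ≤ n → evalAt (n + 1) Q = c * evalAt n Q + evalAt n P := by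
  induction P using MonoidAlgebra.induction_on with
  | of g =>
    simpa using solve_single c g 1
  | add f g hf hg =>
    obtain ⟨Qf, hQf⟩ := hf
    obtain ⟨Qg, hQg⟩ := hg
    exact ⟨Qf + Qg, fun n hn => by
      simp only [map_add]
      rw [hQf n hn, hQg n hn]; ring⟩
  | smul r f hf =>
    obtain ⟨Q, hQ⟩ := hf
    exact ⟨r • Q, fun n hn => by
      simp only [map_smul, smul_eq_mul]
      rw [hQ n hn]; ring⟩

/-- Closure of `PE` under the affine recurrence `u (n+1) = c * u n + v n`, `c ∈ ℕ`. -/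
lemma PE_of_recurrence (c : ℕ) {u v : ℕ → ℚ} (hv : PE v)
    (hrec : ∀ n, u (n + 1) = c * u n + v n) : PE u := by
  obtain ⟨P, hP⟩ := hv
  rw [Filter.eventually_atTop] at hP
  obtain ⟨N₀, hN₀⟩ := hP
  obtain ⟨Q, hQ⟩ := solve_all c P
  set N : ℕ := max N₀ 1 with hN
  have hd : ∀ n, N ≤ n → u (n + 1) - evalAt (n + 1) Q = c * (u n - evalAt n Q) := by
    intro n hn
    rw [hrec n, hQ n (le_trans (le_max_right _ _) hn), hN₀ n (le_trans (le_max_left _ _) hn)]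
    ring
  rcases Nat.eq_zero_or_pos c with hc0 | hc1
  · -- c = 0 : u is eventually `evalAt · Q`
    refine ⟨Q, Filter.eventually_atTop.2 ⟨N + 1, fun n hn => ?_⟩⟩
    obtain ⟨m, rfl⟩ : ∃ m, n = m + 1 := ⟨n - 1, by omega⟩
    have := hd m (by omega)
    rw [hc0] at this
    push_cast at this
    linarith
  · -- c ≥ 1 : add the homogeneous part
    have hcQ : (c : ℚ) ≠ 0 := by positivity
    set D : ℚ := (u N - evalAt N Q) / (c : ℚ) ^ N with hD
    refine ⟨Q + MonoidAlgebra.single ((c, Multiplicative.ofAdd 0) : M) D,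
      Filter.eventually_atTop.2 ⟨N, fun n hn => ?_⟩⟩
    have key : ∀ n, N ≤ n → u n - evalAt n Q = (u N - evalAt N Q) * (c : ℚ) ^ (n - N) := by
      intro n hn
      induction n, hn using Nat.le_induction with
      | base => simp
      | succ n hn ih =>
        rw [hd n hn, ih]
        rw [show n + 1 - N = (n - N) + 1 by omega]
        ring
    rw [map_add, evalAt_single]
    simp only [show Multiplicative.toAdd (Multiplicative.ofAdd 0) = 0 from rfl, pow_zero, mul_one]
    have hpow : (c : ℚ) ^ n = (c : ℚ) ^ N * (c : ℚ) ^ (n - N) := by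
      rw [← pow_add]
      congr 1
      omega
    have hDn : D * (c : ℚ) ^ n = (u N - evalAt N Q) * (c : ℚ) ^ (n - N) := by
      rw [hD, hpow]
      field_simp
    have := key n hn
    linarith [this, hDn]

/-! ### Sign stabilization -/

lemma evalAt_eq_sum (P : MonoidAlgebra ℚ M) (n : ℕ) (hn : 1 ≤ n) :
    evalAt n P = ∑ x ∈ P.coeff.support.filter (fun x : M => 1 ≤ x.1),
      P.coeff x * ((x.1 : ℚ) ^ n * (n : ℚ) ^ (Multiplicative.toAdd x.2)) := by
  rw [evalAt, MonoidAlgebra.lift_apply, Finsupp.sum]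
  rw [Finset.sum_filter_of_ne]
  · refine Finset.sum_congr rfl fun x _ => ?_
    simp [phiN, smul_eq_mul]
  · intro x _ hx
    by_contra h
    have hx0 : x.1 = 0 := by omega
    apply hx
    simp [phiN, hx0, smul_eq_mul, zero_pow (by omega : n ≠ 0)]

lemma sign_stab (P : MonoidAlgebra ℚ M) :
    (∀ᶠ n in atTop, 0 < evalAt n P) ∨ (∀ᶠ n in atTop, evalAt n P ≤ 0) := by
  set S := P.coeff.support.filter (fun x : M => 1 ≤ x.1) with hS
  rcases S.eq_empty_or_nonempty with hSe | hSne
  · refine Or.inr (Filter.eventually_atTop.2 ⟨1, fun n hn => ?_⟩)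
    rw [evalAt_eq_sum P n hn, ← hS, hSe, Finset.sum_empty]
  obtain ⟨m, hmS, hmax⟩ := S.exists_max_image
    (fun x : M => toLex ((x.1, Multiplicative.toAdd x.2) : ℕ × ℕ)) hSne
  have hmP : P.coeff m ≠ 0 := Finsupp.mem_support_iff.1 (Finset.mem_filter.1 hmS).1
  have hmb : 1 ≤ m.1 := (Finset.mem_filter.1 hmS).2
  set b₀ : ℕ := m.1 with hb₀
  set a₀ : ℕ := Multiplicative.toAdd m.2 with ha₀
  -- the denominator
  set den : ℕ → ℝ := fun n => (b₀ : ℝ) ^ n * (n : ℝ) ^ a₀ with hden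
  have hdenpos : ∀ n : ℕ, 1 ≤ n → 0 < den n := by
    intro n hn
    have : (0:ℝ) < (b₀ : ℝ) := by exact_mod_cast hmb
    have : (0:ℝ) < (n : ℝ) := by exact_mod_cast hn
    positivity
  -- each non-maximal term over the denominator tends to 0
  have hterm : ∀ x ∈ S.erase m,
      Filter.Tendsto (fun n : ℕ =>
        ((P.coeff x : ℚ) : ℝ) * ((x.1 : ℝ) ^ n * (n : ℝ) ^ (Multiplicative.toAdd x.2)) / den n)
        atTop (nhds 0) := by
    intro x hx
    have hxS : x ∈ S := Finset.mem_erase.1 hx |>.2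
    have hxne : x ≠ m := Finset.mem_erase.1 hx |>.1
    have hxb : 1 ≤ x.1 := (Finset.mem_filter.1 hxS).2
    have hlexle := hmax x hxS
    set a₁ : ℕ := Multiplicative.toAdd x.2 with ha₁
    have hlex : x.1 < b₀ ∨ (x.1 = b₀ ∧ a₁ < a₀) := by
      rcases lt_or_eq_of_le hlexle with h | h
      · rw [Prod.Lex.lt_iff] at h
        exact h
      · exfalso
        apply hxne
        have h2 : ((x.1, a₁) : ℕ × ℕ) = ((b₀, a₀) : ℕ × ℕ) := by
          exact toLex.injective h
        have hfst : x.1 = b₀ := congrArg Prod.fst h2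
        have hsnd : a₁ = a₀ := congrArg Prod.snd h2
        ext
        · exact hfst
        · exact hsnd
    have hb₀pos : (0:ℝ) < (b₀ : ℝ) := by exact_mod_cast hmb
    rcases hlex with hcase | ⟨hbeq, haless⟩
    · -- smaller base
      have hr0 : (0:ℝ) ≤ (x.1 : ℝ) / (b₀ : ℝ) := by positivity
      have hr1 : (x.1 : ℝ) / (b₀ : ℝ) < 1 := by
        rw [div_lt_one hb₀pos]
        exact_mod_cast hcase
    -- squeeze
      have hlim : Filter.Tendsto
          (fun n : ℕ => |((P.coeff x : ℚ) : ℝ)| * ((n : ℝ) ^ a₁ * ((x.1 : ℝ) / (b₀ : ℝ)) ^ n))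
          atTop (nhds 0) := by
        have := (tendsto_pow_const_mul_const_pow_of_lt_one a₁ hr0 hr1).const_mul
          |((P.coeff x : ℚ) : ℝ)|
        simpa using this
      refine squeeze_zero_norm' ?_ hlim
      refine Filter.eventually_atTop.2 ⟨1, fun n hn => ?_⟩
      have hnpos : (0:ℝ) < (n:ℝ) := by exact_mod_cast hn
      have hA : (0:ℝ) ≤ (x.1 : ℝ) ^ n * (n : ℝ) ^ a₁ := by positivity
      rw [Real.norm_eq_abs, abs_div, abs_mul, abs_of_nonneg hA,
        abs_of_pos (hdenpos n hn)]
      rw [div_le_iff₀ (hdenpos n hn)]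
      have h1 : (1:ℝ) ≤ (n : ℝ) ^ a₀ := one_le_pow₀ (by exact_mod_cast hn)
      have hexp : ((x.1 : ℝ) / (b₀ : ℝ)) ^ n = (x.1 : ℝ) ^ n / (b₀ : ℝ) ^ n := div_pow _ _ n
      have hb₀n : (0:ℝ) < (b₀ : ℝ) ^ n := by positivity
      rw [hden]
      have key : (x.1 : ℝ) ^ n * (n : ℝ) ^ a₁ ≤
          ((n : ℝ) ^ a₁ * ((x.1 : ℝ) / (b₀ : ℝ)) ^ n) * ((b₀ : ℝ) ^ n * (n : ℝ) ^ a₀) := by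
        rw [hexp]
        rw [show (n : ℝ) ^ a₁ * ((x.1:ℝ) ^ n / (b₀:ℝ) ^ n) * ((b₀:ℝ) ^ n * (n:ℝ) ^ a₀)
          = ((x.1:ℝ) ^ n * (n:ℝ) ^ a₁) * (((b₀:ℝ) ^ n / (b₀:ℝ) ^ n) * (n:ℝ) ^ a₀) by ring]
        rw [div_self (ne_of_gt hb₀n)]
        nlinarith [hA, h1]
      calc |((P.coeff x : ℚ) : ℝ)| * ((x.1 : ℝ) ^ n * (n : ℝ) ^ a₁)
          ≤ |((P.coeff x : ℚ) : ℝ)| * (((n : ℝ) ^ a₁ * ((x.1 : ℝ) / (b₀ : ℝ)) ^ n)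
              * ((b₀ : ℝ) ^ n * (n : ℝ) ^ a₀)) := by
            exact mul_le_mul_of_nonneg_left key (abs_nonneg _)
        _ = |((P.coeff x : ℚ) : ℝ)| * ((n : ℝ) ^ a₁ * ((x.1 : ℝ) / (b₀ : ℝ)) ^ n)
              * ((b₀ : ℝ) ^ n * (n : ℝ) ^ a₀) := by ring
    · -- same base, smaller exponent
      have hlim : Filter.Tendsto (fun n : ℕ => |((P.coeff x : ℚ) : ℝ)| * (1 / (n:ℝ)))
          atTop (nhds 0) := by
        have := tendsto_one_div_atTop_nhds_zero_nat.const_mul |((P.coeff x : ℚ) : ℝ)|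
        simpa using this
      refine squeeze_zero_norm' ?_ hlim
      refine Filter.eventually_atTop.2 ⟨1, fun n hn => ?_⟩
      have hnpos : (0:ℝ) < (n:ℝ) := by exact_mod_cast hn
      have hA : (0:ℝ) ≤ (x.1 : ℝ) ^ n * (n : ℝ) ^ a₁ := by positivity
      rw [Real.norm_eq_abs, abs_div, abs_mul, abs_of_nonneg hA,
        abs_of_pos (hdenpos n hn)]
      rw [div_le_iff₀ (hdenpos n hn)]
      have hstep : (n : ℝ) ^ a₁ * (n : ℝ) ≤ (n : ℝ) ^ a₀ := by
        calc (n : ℝ) ^ a₁ * (n : ℝ) = (n : ℝ) ^ (a₁ + 1) := by rw [pow_succ]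
          _ ≤ (n : ℝ) ^ a₀ := pow_le_pow_right₀ (by exact_mod_cast hn) (by omega)
      have hxb₀ : (x.1 : ℝ) = (b₀ : ℝ) := by exact_mod_cast hbeq
      rw [hden, hxb₀]
      have hb₀n : (0:ℝ) < (b₀ : ℝ) ^ n := by positivity
      have h2 : (n:ℝ) ^ a₁ ≤ (n:ℝ) ^ a₀ / (n:ℝ) := by
        rw [le_div_iff₀ hnpos]
        exact hstep
      have h3 : (b₀:ℝ) ^ n * (n:ℝ) ^ a₁ ≤ (1/(n:ℝ)) * ((b₀:ℝ) ^ n * (n:ℝ) ^ a₀) := by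
        rw [show (1/(n:ℝ)) * ((b₀:ℝ) ^ n * (n:ℝ) ^ a₀)
          = (b₀:ℝ) ^ n * ((n:ℝ) ^ a₀ / (n:ℝ)) by ring]
        exact mul_le_mul_of_nonneg_left h2 (le_of_lt hb₀n)
      calc |((P.coeff x : ℚ) : ℝ)| * ((b₀:ℝ) ^ n * (n:ℝ) ^ a₁)
          ≤ |((P.coeff x : ℚ) : ℝ)| * ((1/(n:ℝ)) * ((b₀:ℝ) ^ n * (n:ℝ) ^ a₀)) :=
            mul_le_mul_of_nonneg_left h3 (abs_nonneg _)
        _ = |((P.coeff x : ℚ) : ℝ)| * (1/(n:ℝ)) * ((b₀:ℝ) ^ n * (n:ℝ) ^ a₀) := by ring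
  -- the normalized error sum tends to 0
  have hsum0 : Filter.Tendsto (fun n : ℕ =>
      ∑ x ∈ S.erase m,
        ((P.coeff x : ℚ) : ℝ) * ((x.1 : ℝ) ^ n * (n : ℝ) ^ (Multiplicative.toAdd x.2)) / den n)
      atTop (nhds 0) := by
    have := tendsto_finset_sum (S.erase m) hterm
    simpa using this
  -- the normalized full sum tends to `P.coeff m`
  have hGfull : Filter.Tendsto (fun n : ℕ => ((evalAt n P : ℚ) : ℝ) / den n) atTop
      (nhds ((P.coeff m : ℚ) : ℝ)) := by
    have hG : Filter.Tendsto (fun n : ℕ => ((P.coeff m : ℚ) : ℝ) +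
        ∑ x ∈ S.erase m,
          ((P.coeff x : ℚ) : ℝ) * ((x.1 : ℝ) ^ n * (n : ℝ) ^ (Multiplicative.toAdd x.2)) / den n)
        atTop (nhds ((P.coeff m : ℚ) : ℝ)) := by
      simpa using hsum0.const_add ((P.coeff m : ℚ) : ℝ)
    refine Filter.Tendsto.congr' ?_ hG
    refine Filter.eventually_atTop.2 ⟨1, fun n hn => ?_⟩
    dsimp only
    have hcast : ((evalAt n P : ℚ) : ℝ)
        = ∑ x ∈ S, ((P.coeff x : ℚ) : ℝ) * ((x.1 : ℝ) ^ n * (n : ℝ) ^ (Multiplicative.toAdd x.2)) := by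
      rw [evalAt_eq_sum P n hn, ← hS]
      push_cast
      rfl
    rw [hcast, ← Finset.add_sum_erase S _ hmS, add_div, Finset.sum_div]
    congr 1
    rw [show ((m.1 : ℝ) ^ n * (n : ℝ) ^ (Multiplicative.toAdd m.2)) = den n from rfl]
    rw [mul_div_assoc, div_self (ne_of_gt (hdenpos n hn)), mul_one]
  -- conclude from the sign of `P.coeff m`
  rcases lt_trichotomy (P.coeff m) 0 with hPm | hPm | hPm
  · refine Or.inr ?_
    have hccast : ((P.coeff m : ℚ) : ℝ) < 0 := by exact_mod_cast hPm
    have hev : ∀ᶠ n in atTop, ((evalAt n P : ℚ) : ℝ) / den n < 0 :=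
      hGfull.eventually (eventually_lt_nhds hccast)
    filter_upwards [hev, Filter.eventually_ge_atTop 1] with n h1 h2
    have hdp := hdenpos n h2
    have : ((evalAt n P : ℚ) : ℝ) < 0 := by
      by_contra hcon
      push_neg at hcon
      exact absurd (div_nonneg hcon (le_of_lt hdp)) (not_le.2 h1)
    have : evalAt n P < 0 := by exact_mod_cast this
    linarith
  · exact absurd hPm hmP
  · refine Or.inl ?_
    have hccast : (0:ℝ) < ((P.coeff m : ℚ) : ℝ) := by exact_mod_cast hPm
    have hev : ∀ᶠ n in atTop, 0 < ((evalAt n P : ℚ) : ℝ) / den n :=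
      hGfull.eventually (eventually_gt_nhds hccast)
    filter_upwards [hev, Filter.eventually_ge_atTop 1] with n h1 h2
    have hdp := hdenpos n h2
    have : (0:ℝ) < ((evalAt n P : ℚ) : ℝ) := by
      by_contra hcon
      push_neg at hcon
      have : ((evalAt n P : ℚ) : ℝ) / den n ≤ 0 :=
        div_nonpos_iff.2 (Or.inr ⟨hcon, le_of_lt hdp⟩)
      linarith
    exact_mod_cast this

/-! ### Polynomial evaluations of PE coordinate functions are PE -/

lemma PE_zero : PE (fun _ => (0:ℚ)) := ⟨0, Filter.Eventually.of_forall fun n => by simp⟩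

lemma eval_fun_mem {d : ℕ} (σ : Fin d → ℕ → ℚ) (h : ∀ j, PE (σ j))
    (q : MvPolynomial (Fin d) ℚ) :
    PE (fun n => MvPolynomial.eval (fun j => σ j n) q) := by
  show (fun n => MvPolynomial.eval (fun j => σ j n) q) ∈ PEsub
  induction q using MvPolynomial.induction_on with
  | C a =>
    convert PEsub.algebraMap_mem a using 1
    funext n
    simp [MvPolynomial.eval_C]
  | add p q hp hq =>
    convert add_mem hp hq using 1
    funext n
    simp [MvPolynomial.eval_add]
  | mul_X p i hp =>
    convert mul_mem hp (show σ i ∈ PEsub from h i) using 1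
    funext n
    simp [MvPolynomial.eval_mul]

lemma PE_int_eval {d : ℕ} (σ : ℕ → Fin d → ℤ) (q : MvPolynomial (Fin d) ℤ)
    (h : ∀ j ∈ q.vars, PE (fun n => ((σ n j : ℤ) : ℚ))) :
    PE (fun n => ((MvPolynomial.eval (σ n) q : ℤ) : ℚ)) := by
  classical
  set σ' : Fin d → ℕ → ℚ :=
    fun j => if j ∈ q.vars then (fun n => ((σ n j : ℤ) : ℚ)) else (fun _ => 0) with hσ'
  have hall : ∀ j, PE (σ' j) := by
    intro j
    rw [hσ']
    dsimp only
    split_ifs with hj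
    · exact h j hj
    · exact PE_zero
  have hmem := eval_fun_mem σ' hall (q.map (Int.castRingHom ℚ))
  convert hmem using 1
  funext n
  -- cast the integer evaluation to ℚ
  have h1 : ((MvPolynomial.eval (σ n) q : ℤ) : ℚ)
      = MvPolynomial.eval (fun j => ((σ n j : ℤ) : ℚ)) (q.map (Int.castRingHom ℚ)) := by
    rw [MvPolynomial.eval_map]
    have hcomp := MvPolynomial.eval₂_comp_left (Int.castRingHom ℚ) (RingHom.id ℤ) (σ n) q
    rw [RingHom.comp_id, MvPolynomial.eval₂_id] at hcomp
    rw [show ((MvPolynomial.eval (σ n) q : ℤ) : ℚ)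
      = (Int.castRingHom ℚ) (MvPolynomial.eval (σ n) q) from rfl, hcomp]
    rfl
  rw [h1]
  -- identify the two evaluations on the variables of `q.map …`
  rw [MvPolynomial.eval_eq, MvPolynomial.eval_eq]
  refine Finset.sum_congr rfl fun dd hdd => ?_
  congr 1
  refine Finset.prod_congr rfl fun v hv => ?_
  have hiq : v ∈ q.vars :=
    (MvPolynomial.mem_vars v).2 ⟨dd, MvPolynomial.support_map_subset _ _ hdd, hv⟩
  rw [hσ']
  simp [hiq]

end Stab

section Stabilization

open Stab Filter

variable {d : ℕ}

/-- Every coordinate of the orbit of a tnn update is a poly-exponential function of `n`. -/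
lemma orbit_coord_PE (η : Fin d → MvPolynomial (Fin d) ℤ) (htnn : IsTNN η) (e : Fin d → ℤ) :
    ∀ i : Fin d, PE (fun n => (((updFun η)^[n] e i : ℤ) : ℚ)) := by
  obtain ⟨c, p, htri, hc⟩ := htnn
  suffices H : ∀ k : ℕ, ∀ i : Fin d, d - i.val ≤ k →
      PE (fun n => (((updFun η)^[n] e i : ℤ) : ℚ)) from fun i => H d i (by omega)
  intro k
  induction k with
  | zero =>
    intro i hi
    exact absurd hi (by have := i.isLt; omega)
  | succ k ih =>
    intro i hi
    have hvars : ∀ j ∈ (p i).vars, i < j := (htri i).2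
    have hforce : PE (fun n => ((MvPolynomial.eval ((updFun η)^[n] e) (p i) : ℤ) : ℚ)) := by
      apply PE_int_eval
      intro j hj
      refine ih j ?_
      have h1 : i < j := hvars j hj
      have h2 := j.isLt
      have h3 : i.val < j.val := h1
      omega
    refine PE_of_recurrence (c i).toNat hforce ?_
    intro n
    have hstep : (updFun η)^[n+1] e i
        = c i * ((updFun η)^[n] e i) + MvPolynomial.eval ((updFun η)^[n] e) (p i) := by
      rw [Function.iterate_succ_apply']
      show MvPolynomial.eval _ (η i) = _
      rw [(htri i).1]
      simp
    rw [hstep]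
    have hcn : (((c i).toNat : ℕ) : ℚ) = ((c i : ℤ) : ℚ) := by
      exact_mod_cast congrArg (fun z : ℤ => (z : ℚ)) (Int.toNat_of_nonneg (hc i))
    push_cast
    rw [hcn]
    try ring

/-- A predicate on `ℕ` is eventually constant. -/
def EvConst (A : ℕ → Prop) : Prop := (∀ᶠ n in atTop, A n) ∨ (∀ᶠ n in atTop, ¬ A n)

lemma EvConst.and {A B : ℕ → Prop} (hA : EvConst A) (hB : EvConst B) :
    EvConst (fun n => A n ∧ B n) := by
  rcases hA with hA | hA
  · rcases hB with hB | hB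
    · exact Or.inl (by filter_upwards [hA, hB] with n h1 h2 using ⟨h1, h2⟩)
    · exact Or.inr (by filter_upwards [hB] with n h2 using fun h => h2 h.2)
  · exact Or.inr (by filter_upwards [hA] with n h1 using fun h => h1 h.1)

lemma EvConst.or {A B : ℕ → Prop} (hA : EvConst A) (hB : EvConst B) :
    EvConst (fun n => A n ∨ B n) := by
  rcases hA with hA | hA
  · exact Or.inl (by filter_upwards [hA] with n h1 using Or.inl h1)
  · rcases hB with hB | hB
    · exact Or.inl (by filter_upwards [hB] with n h2 using Or.inr h2)
    · exact Or.inr (by filter_upwards [hA, hB] with n h1 h2 using fun h => h.elim h1 h2)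

lemma atom_evconst (η : Fin d → MvPolynomial (Fin d) ℤ) (htnn : IsTNN η) (e : Fin d → ℤ)
    (p q : MvPolynomial (Fin d) ℤ) :
    EvConst (fun n => MvPolynomial.eval ((updFun η)^[n] e) p
      < MvPolynomial.eval ((updFun η)^[n] e) q) := by
  have hPE : PE (fun n => ((MvPolynomial.eval ((updFun η)^[n] e) (q - p) : ℤ) : ℚ)) :=
    PE_int_eval _ _ (fun j _ => orbit_coord_PE η htnn e j)
  obtain ⟨P, hP⟩ := hPE
  rcases sign_stab P with h | h
  · left
    filter_upwards [h, hP] with n h1 h2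
    rw [← h2] at h1
    have h3 : (0:ℤ) < MvPolynomial.eval ((updFun η)^[n] e) (q - p) := by exact_mod_cast h1
    rw [map_sub] at h3
    linarith
  · right
    filter_upwards [h, hP] with n h1 h2
    rw [← h2] at h1
    have h3 : MvPolynomial.eval ((updFun η)^[n] e) (q - p) ≤ 0 := by exact_mod_cast h1
    rw [map_sub] at h3
    intro hcon
    linarith

lemma fml_evconst (η : Fin d → MvPolynomial (Fin d) ℤ) (htnn : IsTNN η) (e : Fin d → ℤ) :
    ∀ φ : Fml (Fin d), EvConst (fun n => φ.holds ((updFun η)^[n] e))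
  | .lt p q => atom_evconst η htnn e p q
  | .and f g => by
    have h := (fml_evconst η htnn e f).and (fml_evconst η htnn e g)
    simpa [Fml.holds] using h
  | .or f g => by
    have h := (fml_evconst η htnn e f).or (fml_evconst η htnn e g)
    simpa [Fml.holds] using h

end Stabilization


/-- the truth value of a guard `φ` stabilizes along every orbit of a
tnn update, i.e. the stabilization threshold (the smallest such `s`) exists. -/
theorem tnn_guard_stabilizes {d : ℕ} (η : Fin d → MvPolynomial (Fin d) ℤ)
    (htnn : IsTNN η) (φ : Fml (Fin d)) (e : Fin d → ℤ) :
    ∃ s : ℕ,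
      (∀ n ≥ s, (φ.holds ((updFun η)^[n] e) ↔ φ.holds ((updFun η)^[s] e))) ∧
      ∀ s' : ℕ, (∀ n ≥ s', (φ.holds ((updFun η)^[n] e) ↔ φ.holds ((updFun η)^[s'] e))) →
        s ≤ s' := by
  have hEC := fml_evconst η htnn e φ
  have hex : ∃ s : ℕ, ∀ n ≥ s, (φ.holds ((updFun η)^[n] e) ↔ φ.holds ((updFun η)^[s] e)) := by
    rcases hEC with h | h
    · obtain ⟨N, hN⟩ := Filter.eventually_atTop.1 h
      exact ⟨N, fun n hn => iff_of_true (hN n hn) (hN N le_rfl)⟩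
    · obtain ⟨N, hN⟩ := Filter.eventually_atTop.1 h
      exact ⟨N, fun n hn => iff_of_false (hN n hn) (hN N le_rfl)⟩
  exact ⟨Nat.find hex, Nat.find_spec hex, fun s' hs' => Nat.find_min' hex hs'⟩

end Koat
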